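/- Let ρ_in : ℝ → ℝ be Lebesgue integrable and for t > 0 define ρ(x, t) = (1/(π t)) ∫_{−t}^{t} ρ_in(x − y) (1 − (y/t)²)^{−1/2} dy. Then for every real s > 0 and ξ ∈ ℝ, ∫₀^∞ ∫_ℝ e^{−s t − i ξ x} ρ(x, t) dx dt = ρ̂_in(ξ) / √(s² + ξ²), where ρ̂_in(ξ) = ∫_ℝ e^{−i ξ x} ρ_in(x) dx. -/

import Mathlib

open MeasureTheory Set Real Filter

lemma my_integral_ofReal' {X : Type*} [MeasurableSpace X] {μ : Measure X} (f : X → ℝ) :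
    ∫ x, ((f x : ℝ) : ℂ) ∂μ = ((∫ x, f x ∂μ : ℝ) : ℂ) := integral_ofReal

lemma img_sin (t : ℝ) (ht : 0 < t) :
    (fun θ : ℝ => t * Real.sin θ) '' Ioo (-(π/2)) (π/2) = Ioo (-t) t := by
  have hpi : (0:ℝ) < π / 2 := by positivity
  have h1 : Real.sin '' Ioo (-(π/2)) (π/2) = Ioo (-1) 1 := by
    apply Subset.antisymm
    · rintro y ⟨θ, hθ, rfl⟩
      have hθ' : θ ∈ Icc (-(π/2)) (π/2) := Ioo_subset_Icc_self hθ
      constructor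
      · have := Real.strictMonoOn_sin (left_mem_Icc.2 (by linarith)) hθ' hθ.1
        simpa using this
      · have := Real.strictMonoOn_sin hθ' (right_mem_Icc.2 (by linarith)) hθ.2
        simpa using this
    · rintro y hy
      exact ⟨Real.arcsin y, ⟨(Real.neg_pi_div_two_lt_arcsin).2 hy.1,
        Real.arcsin_lt_pi_div_two.2 hy.2⟩, Real.sin_arcsin hy.1.le hy.2.le⟩
  have : (fun θ : ℝ => t * Real.sin θ) '' Ioo (-(π/2)) (π/2)
      = (fun y => t * y) '' (Real.sin '' Ioo (-(π/2)) (π/2)) := by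
    rw [image_image]
  rw [this, h1, image_mul_left_Ioo ht, mul_neg_one, mul_one]

lemma subst_sin (f : ℝ → ℝ) (t x : ℝ) (ht : 0 < t) :
    ∫ y in Ioo (-t) t, f (x - y) * (Real.sqrt (1 - (y / t) ^ 2))⁻¹
      = t * ∫ θ in Ioo (-(π/2)) (π/2), f (x - t * Real.sin θ) := by
  have hd : ∀ θ ∈ Ioo (-(π/2)) (π/2), HasDerivWithinAt (fun θ : ℝ => t * Real.sin θ)
      (t * Real.cos θ) (Ioo (-(π/2)) (π/2)) θ := fun θ _ =>
    ((Real.hasDerivAt_sin θ).const_mul t).hasDerivWithinAt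
  have hinj : InjOn (fun θ : ℝ => t * Real.sin θ) (Ioo (-(π/2)) (π/2)) := by
    intro a ha b hb hab
    have : Real.sin a = Real.sin b := mul_left_cancel₀ ht.ne' hab
    exact Real.strictMonoOn_sin.injOn (Ioo_subset_Icc_self ha) (Ioo_subset_Icc_self hb) this
  rw [← img_sin t ht, integral_image_eq_integral_abs_deriv_smul measurableSet_Ioo hd hinj]
  rw [← integral_const_mul]
  apply setIntegral_congr_fun measurableSet_Ioo
  intro θ hθ
  have hc : 0 < Real.cos θ := Real.cos_pos_of_mem_Ioo hθ
  have h1 : t * Real.sin θ / t = Real.sin θ := mul_div_cancel_left₀ _ ht.ne'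
  have h2 : Real.sqrt (1 - Real.sin θ ^ 2) = Real.cos θ := by
    rw [← Real.cos_sq']
    exact Real.sqrt_sq hc.le
  simp only [smul_eq_mul, h1, h2]
  rw [abs_of_pos (by positivity)]
  field_simp

lemma laplace_exp (c : ℂ) (hc : 0 < c.re) :
    ∫ t in Ioi (0:ℝ), Complex.exp (-(c * t)) = c⁻¹ := by
  have hc0 : c ≠ 0 := fun h => by simp [h] at hc
  have hcont : Continuous (fun t : ℝ => Complex.exp (-(c * t))) :=
    Complex.continuous_exp.comp (continuous_const.mul Complex.continuous_ofReal).neg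
  have hder : ∀ t : ℝ, HasDerivAt (fun t : ℝ => -c⁻¹ * Complex.exp (-(c * t)))
      (Complex.exp (-(c * t))) t := by
    intro t
    have h1 : HasDerivAt (fun t : ℝ => -(c * (t:ℂ))) (-c) t := by
      simpa using (Complex.ofRealCLM.hasDerivAt (x := t)).const_mul (-c)
    have := h1.cexp.const_mul (-c⁻¹)
    refine this.congr_deriv ?_
    field_simp
  have hint : IntegrableOn (fun t : ℝ => Complex.exp (-(c * t))) (Ioi (0:ℝ)) := by
    apply Integrable.mono' (exp_neg_integrableOn_Ioi 0 hc) hcont.aestronglyMeasurable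
    filter_upwards with t
    simp [Complex.norm_exp]
  have htend : Tendsto (fun t : ℝ => -c⁻¹ * Complex.exp (-(c * t))) atTop (nhds 0) := by
    rw [tendsto_zero_iff_norm_tendsto_zero]
    have heq : (fun t : ℝ => ‖-c⁻¹ * Complex.exp (-(c * t))‖)
        = fun t : ℝ => ‖c⁻¹‖ * Real.exp (-(c.re * t)) := by
      funext t; simp [Complex.norm_exp]
    rw [heq]
    have h2 : Tendsto (fun t : ℝ => Real.exp (-(c.re * t))) atTop (nhds 0) :=
      Real.tendsto_exp_neg_atTop_nhds_zero.comp ((tendsto_const_mul_atTop_of_pos hc).mpr tendsto_id)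
    simpa using h2.const_mul ‖c⁻¹‖
  have := integral_Ioi_of_hasDerivAt_of_tendsto' (f' := fun t : ℝ => Complex.exp (-(c * t)))
    (fun t _ => hder t) hint htend
  rw [this]
  simp


lemma re_piece (s ξ : ℝ) (hs : 0 < s) :
    ∫ θ in Ioo (-(π/2)) (π/2), s / (s^2 + ξ^2 * Real.sin θ ^ 2)
      = π / Real.sqrt (s^2 + ξ^2) := by
  have hrpos : (0:ℝ) < Real.sqrt (s^2 + ξ^2) := Real.sqrt_pos.2 (by positivity)
  set r := Real.sqrt (s^2 + ξ^2) with hrdef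
  have hr2 : r ^ 2 = s^2 + ξ^2 := Real.sq_sqrt (by positivity)
  have himg : Ioo (-(π/2)) (π/2) = Real.arctan '' univ := by
    rw [image_univ, Real.range_arctan]
  rw [himg, integral_image_eq_integral_abs_deriv_smul MeasurableSet.univ
      (fun v _ => (Real.hasDerivAt_arctan' v).hasDerivWithinAt)
      Real.arctan_injective.injOn]
  rw [Measure.restrict_univ]
  have hfun : ∀ v : ℝ, |(1 + v^2)⁻¹| • (s / (s^2 + ξ^2 * Real.sin (Real.arctan v) ^ 2))
      = s⁻¹ * (1 + (r / s * v)^2)⁻¹ := by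
    intro v
    have h1 : (0:ℝ) < 1 + v^2 := by positivity
    have h2 : (0:ℝ) < 1 + (r / s * v)^2 := by positivity
    have hsq : Real.sin (Real.arctan v) ^ 2 = v^2 / (1 + v^2) := by
      rw [Real.sin_arctan, div_pow, Real.sq_sqrt h1.le]
    have h3 : (0:ℝ) < s^2 + ξ^2 * (v^2/(1+v^2)) := by positivity
    rw [hsq, abs_of_pos (by positivity), smul_eq_mul]
    field_simp
    linear_combination v^2 * hr2
  simp_rw [hfun]
  rw [integral_const_mul]
  have key := MeasureTheory.Measure.integral_comp_mul_left
    (fun y : ℝ => (1 + y^2)⁻¹) (r / s)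
  rw [key, integral_univ_inv_one_add_sq, abs_of_pos (by positivity), smul_eq_mul]
  field_simp

lemma odd_piece (s ξ : ℝ) :
    ∫ θ in Ioo (-(π/2)) (π/2), ξ * Real.sin θ / (s^2 + ξ^2 * Real.sin θ ^ 2) = 0 := by
  set g := fun θ : ℝ => ξ * Real.sin θ / (s^2 + ξ^2 * Real.sin θ ^ 2) with hg
  have hodd : ∀ θ, g (-θ) = - g θ := by
    intro θ; simp only [hg, Real.sin_neg]; ring
  have h1 : ∫ θ in Ioo (-(π/2)) (π/2), g θ = ∫ θ in (-(π/2))..(π/2), g θ := by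
    rw [intervalIntegral.integral_of_le (by linarith [Real.pi_pos]),
      integral_Ioc_eq_integral_Ioo]
  rw [h1]
  have h2 := intervalIntegral.integral_comp_neg (a := -(π/2)) (b := π/2) g
  simp only [neg_neg] at h2
  simp_rw [hodd] at h2
  rw [intervalIntegral.integral_neg] at h2
  linarith

lemma inv_split (s ξ σ : ℝ) (hs : 0 < s) :
    ((s:ℂ) + Complex.I * ξ * σ)⁻¹
      = ((s / (s^2 + ξ^2 * σ^2) : ℝ) : ℂ) - Complex.I * ((ξ * σ / (s^2 + ξ^2 * σ^2) : ℝ) : ℂ) := by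
  have hd : (0:ℝ) < s^2 + ξ^2 * σ^2 := by positivity
  have hdc : ((s^2 + ξ^2*σ^2 : ℝ) : ℂ) ≠ 0 := Complex.ofReal_ne_zero.2 hd.ne'
  apply inv_eq_of_mul_eq_one_right
  push_cast
  push_cast at hdc
  field_simp
  linear_combination (-(ξ:ℂ)^2 * σ^2) * Complex.I_sq

lemma theta_integral (s ξ : ℝ) (hs : 0 < s) :
    ∫ θ in Ioo (-(π/2)) (π/2), ((s:ℂ) + Complex.I * ξ * Real.sin θ)⁻¹
      = ((π / Real.sqrt (s^2 + ξ^2) : ℝ) : ℂ) := by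
  have hA : Continuous (fun θ : ℝ => s / (s^2 + ξ^2 * Real.sin θ ^ 2)) := by
    apply continuous_const.div (by continuity)
    intro θ; positivity
  have hB : Continuous (fun θ : ℝ => ξ * Real.sin θ / (s^2 + ξ^2 * Real.sin θ ^ 2)) := by
    apply Continuous.div (by continuity) (by continuity)
    intro θ; positivity
  have hAi : IntegrableOn (fun θ : ℝ => ((s / (s^2 + ξ^2 * Real.sin θ ^ 2) : ℝ) : ℂ))
      (Ioo (-(π/2)) (π/2)) :=
    ((hA.integrableOn_Icc).mono_set Ioo_subset_Icc_self).ofReal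
  have hBi : IntegrableOn
      (fun θ : ℝ => Complex.I * ((ξ * Real.sin θ / (s^2 + ξ^2 * Real.sin θ ^ 2) : ℝ) : ℂ))
      (Ioo (-(π/2)) (π/2)) :=
    (((hB.integrableOn_Icc).mono_set Ioo_subset_Icc_self).ofReal).const_mul _
  calc ∫ θ in Ioo (-(π/2)) (π/2), ((s:ℂ) + Complex.I * ξ * Real.sin θ)⁻¹
      = ∫ θ in Ioo (-(π/2)) (π/2),
          (((s / (s^2 + ξ^2 * Real.sin θ ^ 2) : ℝ) : ℂ)
            - Complex.I * ((ξ * Real.sin θ / (s^2 + ξ^2 * Real.sin θ ^ 2) : ℝ) : ℂ)) := by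
        apply setIntegral_congr_fun measurableSet_Ioo
        intro θ _
        exact inv_split s ξ (Real.sin θ) hs
    _ = (∫ θ in Ioo (-(π/2)) (π/2), ((s / (s^2 + ξ^2 * Real.sin θ ^ 2) : ℝ) : ℂ))
          - Complex.I * ∫ θ in Ioo (-(π/2)) (π/2),
            ((ξ * Real.sin θ / (s^2 + ξ^2 * Real.sin θ ^ 2) : ℝ) : ℂ) := by
        rw [integral_sub hAi hBi, integral_const_mul]
    _ = ((π / Real.sqrt (s^2 + ξ^2) : ℝ) : ℂ) := by
        rw [my_integral_ofReal', my_integral_ofReal', re_piece s ξ hs, odd_piece s ξ]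
        simp

lemma lap_theta (s ξ : ℝ) (hs : 0 < s) :
    ∫ t in Ioi (0:ℝ), (∫ θ in Ioo (-(π/2)) (π/2),
        Complex.exp (-(((s:ℂ) + Complex.I * ξ * Real.sin θ) * t)))
      = ∫ θ in Ioo (-(π/2)) (π/2), ((s:ℂ) + Complex.I * ξ * Real.sin θ)⁻¹ := by
  have hre : ∀ (σ t : ℝ), (-(((s:ℂ) + Complex.I * ξ * σ) * t)).re = -(s*t) := by
    intro σ t; simp [Complex.add_re, Complex.mul_re]
  have hcont : Continuous (fun p : ℝ × ℝ =>
      Complex.exp (-(((s:ℂ) + Complex.I * ξ * Real.sin p.2) * p.1))) := by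
    apply Complex.continuous_exp.comp
    apply Continuous.neg
    exact (continuous_const.add (continuous_const.mul
      (Complex.continuous_ofReal.comp (Real.continuous_sin.comp continuous_snd)))).mul
      (Complex.continuous_ofReal.comp continuous_fst)
  have hnorm : ∀ (t θ : ℝ), ‖Complex.exp (-(((s:ℂ) + Complex.I * ξ * Real.sin θ) * t))‖
      = Real.exp (-(s*t)) := by
    intro t θ; rw [Complex.norm_exp, hre]
  have hint0 : Integrable (fun p : ℝ × ℝ =>
      Complex.exp (-(((s:ℂ) + Complex.I * ξ * Real.sin p.2) * p.1)))
      ((volume.restrict (Ioi (0:ℝ))).prod (volume.restrict (Ioo (-(π/2)) (π/2)))) := by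
    rw [integrable_prod_iff hcont.aestronglyMeasurable]
    constructor
    · filter_upwards with t
      apply Integrable.mono' (g := fun _ : ℝ => Real.exp (-(s*t)))
        (integrableOn_const measure_Ioo_lt_top.ne)
        (hcont.comp (Continuous.prodMk_right t)).aestronglyMeasurable
      filter_upwards with θ
      simp only [Function.comp_apply]
      rw [hnorm]
    · apply Integrable.congr ((exp_neg_integrableOn_Ioi 0 hs).const_mul
        (volume (Ioo (-(π/2)) (π/2))).toReal)
      filter_upwards with t
      have h1 : ∫ θ in Ioo (-(π/2)) (π/2),
          ‖Complex.exp (-(((s:ℂ) + Complex.I * ξ * Real.sin θ) * t))‖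
          = (volume (Ioo (-(π/2)) (π/2))).toReal * Real.exp (-(s*t)) := by
        rw [setIntegral_congr_fun measurableSet_Ioo (fun θ _ => hnorm t θ),
          setIntegral_const, smul_eq_mul, measureReal_def]
      rw [h1, neg_mul]
  have hint : Integrable (Function.uncurry (fun t θ : ℝ =>
      Complex.exp (-(((s:ℂ) + Complex.I * ξ * Real.sin θ) * t))))
      ((volume.restrict (Ioi (0:ℝ))).prod (volume.restrict (Ioo (-(π/2)) (π/2)))) := hint0
  rw [integral_integral_swap hint]
  apply setIntegral_congr_fun measurableSet_Ioo
  intro θ _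
  exact laplace_exp _ (by rw [Complex.add_re]; simp [hs])

lemma exp_norm_one (ξ x : ℝ) : ‖Complex.exp (-(Complex.I * ξ * x))‖ = 1 := by
  rw [Complex.norm_exp]
  simp [Complex.mul_re]

lemma shift_int (f : ℝ → ℝ) (ξ c : ℝ) :
    ∫ x : ℝ, Complex.exp (-(Complex.I * ξ * x)) * (f (x - c) : ℂ)
      = Complex.exp (-(Complex.I * ξ * c)) *
        ∫ x : ℝ, Complex.exp (-(Complex.I * ξ * x)) * (f x : ℂ) := by
  have key := integral_sub_right_eq_self (μ := volume)
    (fun x : ℝ => Complex.exp (-(Complex.I * ξ * x)) * (f x : ℂ)) c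
  rw [← key, ← integral_const_mul]
  refine integral_congr_ae (Filter.Eventually.of_forall fun x => ?_)
  dsimp only
  rw [← mul_assoc, ← Complex.exp_add]
  congr 2
  push_cast
  ring

lemma fourier_step (f : ℝ → ℝ) (hm : StronglyMeasurable f) (hi : Integrable f) (ξ t : ℝ) :
    ∫ x : ℝ, Complex.exp (-(Complex.I * ξ * x)) *
        ((∫ θ in Ioo (-(π/2)) (π/2), f (x - t * Real.sin θ) : ℝ) : ℂ)
      = (∫ x : ℝ, Complex.exp (-(Complex.I * ξ * x)) * (f x : ℂ)) *
        ∫ θ in Ioo (-(π/2)) (π/2), Complex.exp (-(Complex.I * ξ * (t * Real.sin θ))) := by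
  set R := ∫ x : ℝ, Complex.exp (-(Complex.I * ξ * x)) * (f x : ℂ) with hR
  have hg : Measurable (fun p : ℝ × ℝ => f (p.1 - t * Real.sin p.2)) :=
    hm.measurable.comp (measurable_fst.sub ((Real.measurable_sin.comp measurable_snd).const_mul t))
  have hF : AEStronglyMeasurable (fun p : ℝ × ℝ =>
      Complex.exp (-(Complex.I * ξ * p.1)) * (f (p.1 - t * Real.sin p.2) : ℂ))
      (volume.prod (volume.restrict (Ioo (-(π/2)) (π/2)))) := by
    apply Measurable.aestronglyMeasurable
    exact (Complex.measurable_exp.comp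
      (((Complex.measurable_ofReal.comp measurable_fst).const_mul (Complex.I * ξ)).neg)).mul
      (Complex.measurable_ofReal.comp hg)
  have hslice : ∀ c : ℝ, Integrable
      (fun x : ℝ => Complex.exp (-(Complex.I * ξ * x)) * (f (x - c) : ℂ)) := by
    intro c
    exact ((hi.comp_sub_right c).ofReal).bdd_mul
      ((Complex.continuous_exp.comp
        ((continuous_const.mul Complex.continuous_ofReal).neg)).aestronglyMeasurable)
      (Filter.Eventually.of_forall fun x => (exp_norm_one ξ x).le)
  have hprod : Integrable (fun p : ℝ × ℝ =>
      Complex.exp (-(Complex.I * ξ * p.1)) * (f (p.1 - t * Real.sin p.2) : ℂ))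
      (volume.prod (volume.restrict (Ioo (-(π/2)) (π/2)))) := by
    rw [integrable_prod_iff' hF]
    constructor
    · filter_upwards with θ
      exact hslice _
    · apply Integrable.congr
        (integrableOn_const measure_Ioo_lt_top.ne :
          IntegrableOn (fun _ : ℝ => ∫ x : ℝ, |f x|) (Ioo (-(π/2)) (π/2)) volume)
      filter_upwards with θ
      calc (∫ x : ℝ, |f x|)
          = ∫ x : ℝ, |f (x - t * Real.sin θ)| :=
            (integral_sub_right_eq_self (fun x : ℝ => |f x|) _).symm
        _ = ∫ x : ℝ, ‖Complex.exp (-(Complex.I * ξ * x)) * (f (x - t * Real.sin θ) : ℂ)‖ := by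
            refine integral_congr_ae (Filter.Eventually.of_forall fun x => ?_)
            dsimp only
            rw [norm_mul, exp_norm_one, one_mul, Complex.norm_real, Real.norm_eq_abs]
  have huncurry : Integrable (Function.uncurry (fun x θ : ℝ =>
      Complex.exp (-(Complex.I * ξ * x)) * (f (x - t * Real.sin θ) : ℂ)))
      (volume.prod (volume.restrict (Ioo (-(π/2)) (π/2)))) := hprod
  calc ∫ x : ℝ, Complex.exp (-(Complex.I * ξ * x)) *
          ((∫ θ in Ioo (-(π/2)) (π/2), f (x - t * Real.sin θ) : ℝ) : ℂ)
      = ∫ x : ℝ, ∫ θ in Ioo (-(π/2)) (π/2),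
          Complex.exp (-(Complex.I * ξ * x)) * (f (x - t * Real.sin θ) : ℂ) := by
        refine integral_congr_ae (Filter.Eventually.of_forall fun x => ?_)
        dsimp only
        rw [← my_integral_ofReal', ← integral_const_mul]
    _ = ∫ θ in Ioo (-(π/2)) (π/2), ∫ x : ℝ,
          Complex.exp (-(Complex.I * ξ * x)) * (f (x - t * Real.sin θ) : ℂ) :=
        integral_integral_swap huncurry
    _ = ∫ θ in Ioo (-(π/2)) (π/2),
          Complex.exp (-(Complex.I * ξ * (t * Real.sin θ))) * R := by
        refine setIntegral_congr_fun measurableSet_Ioo fun θ _ => ?_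
        rw [shift_int f ξ (t * Real.sin θ)]
        norm_cast
    _ = R * ∫ θ in Ioo (-(π/2)) (π/2),
          Complex.exp (-(Complex.I * ξ * (t * Real.sin θ))) := by
        rw [integral_mul_const, mul_comm]

lemma main_sm (f : ℝ → ℝ) (hm : StronglyMeasurable f) (hi : Integrable f)
    (s ξ : ℝ) (hs : 0 < s) :
    ∫ t in Ioi (0 : ℝ), ∫ x : ℝ,
        Complex.exp (-(s : ℂ) * (t : ℂ) - Complex.I * (ξ : ℂ) * (x : ℂ)) *
          (((1 / (Real.pi * t)) *
            ∫ y in Ioo (-t) t, f (x - y) * (Real.sqrt (1 - (y / t) ^ 2))⁻¹ : ℝ) : ℂ)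
      = (∫ x : ℝ, Complex.exp (-(Complex.I * (ξ : ℂ) * (x : ℂ))) * ((f x : ℝ) : ℂ)) /
          ((Real.sqrt (s ^ 2 + ξ ^ 2) : ℝ) : ℂ) := by
  have hπ : (0:ℝ) < π := Real.pi_pos
  set R := ∫ x : ℝ, Complex.exp (-(Complex.I * (ξ:ℂ) * (x:ℂ))) * ((f x : ℝ) : ℂ) with hRdef
  have key : ∀ t ∈ Ioi (0:ℝ),
      (∫ x : ℝ, Complex.exp (-(s : ℂ) * (t : ℂ) - Complex.I * (ξ : ℂ) * (x : ℂ)) *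
          (((1 / (Real.pi * t)) *
            ∫ y in Ioo (-t) t, f (x - y) * (Real.sqrt (1 - (y / t) ^ 2))⁻¹ : ℝ) : ℂ))
        = (1/(π:ℂ)) * R *
          ∫ θ in Ioo (-(π/2)) (π/2),
            Complex.exp (-(((s:ℂ) + Complex.I * ξ * Real.sin θ) * t)) := by
    intro t ht
    rw [mem_Ioi] at ht
    calc ∫ x : ℝ, Complex.exp (-(s : ℂ) * (t : ℂ) - Complex.I * (ξ : ℂ) * (x : ℂ)) *
          (((1 / (Real.pi * t)) *
            ∫ y in Ioo (-t) t, f (x - y) * (Real.sqrt (1 - (y / t) ^ 2))⁻¹ : ℝ) : ℂ)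
        = ∫ x : ℝ, (Complex.exp (-((s:ℂ) * t)) * (1/(π:ℂ))) *
            (Complex.exp (-(Complex.I * ξ * x)) *
              ((∫ θ in Ioo (-(π/2)) (π/2), f (x - t * Real.sin θ) : ℝ) : ℂ)) := by
          refine integral_congr_ae (Filter.Eventually.of_forall fun x => ?_)
          dsimp only
          rw [subst_sin f t x ht]
          have h1 : (1 / (Real.pi * t)) * (t * ∫ θ in Ioo (-(π/2)) (π/2), f (x - t * Real.sin θ))
              = (1/π) * ∫ θ in Ioo (-(π/2)) (π/2), f (x - t * Real.sin θ) := by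
            field_simp
          rw [h1]
          have h2 : -(s : ℂ) * (t : ℂ) - Complex.I * (ξ : ℂ) * (x : ℂ)
              = (-((s:ℂ) * t)) + (-(Complex.I * ξ * x)) := by ring
          rw [h2, Complex.exp_add]
          push_cast
          ring
      _ = (Complex.exp (-((s:ℂ) * t)) * (1/(π:ℂ))) *
            (R * ∫ θ in Ioo (-(π/2)) (π/2),
              Complex.exp (-(Complex.I * ξ * (t * Real.sin θ)))) := by
          rw [integral_const_mul, fourier_step f hm hi ξ t]
      _ = (1/(π:ℂ)) * R * (Complex.exp (-((s:ℂ) * t)) *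
            ∫ θ in Ioo (-(π/2)) (π/2),
              Complex.exp (-(Complex.I * ξ * (t * Real.sin θ)))) := by ring
      _ = (1/(π:ℂ)) * R *
            ∫ θ in Ioo (-(π/2)) (π/2),
              Complex.exp (-(((s:ℂ) + Complex.I * ξ * Real.sin θ) * t)) := by
          congr 1
          rw [← integral_const_mul]
          refine setIntegral_congr_fun measurableSet_Ioo fun θ _ => ?_
          rw [← Complex.exp_add]
          congr 1
          push_cast
          ring
  rw [setIntegral_congr_fun measurableSet_Ioi key, integral_const_mul,
    lap_theta s ξ hs, theta_integral s ξ hs]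
  have hsq : (0:ℝ) < Real.sqrt (s^2 + ξ^2) := Real.sqrt_pos.2 (by positivity)
  have h1 : ((π / Real.sqrt (s^2+ξ^2) : ℝ) : ℂ) = (π:ℂ) / ((Real.sqrt (s^2+ξ^2) : ℝ) : ℂ) := by
    push_cast; ring
  rw [h1]
  have hπc : (π:ℂ) ≠ 0 := Complex.ofReal_ne_zero.2 hπ.ne'
  have hsqc : ((Real.sqrt (s^2+ξ^2) : ℝ) : ℂ) ≠ 0 := Complex.ofReal_ne_zero.2 hsq.ne'
  field_simp

/-- For `ρ(x,t) = (1/(π t)) ∫_{−t}^{t} ρ_in(x − y)(1 − (y/t)²)^{−1/2} dy`, the iterated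
Fourier–Laplace transform satisfies
`∫₀^∞ ∫_ℝ e^{−st − iξx} ρ(x,t) dx dt = ρ̂_in(ξ)/√(s² + ξ²)`. -/
theorem stmt7 (ρin : ℝ → ℝ) (hρin : Integrable ρin) (s ξ : ℝ) (hs : 0 < s) :
    ∫ t in Ioi (0 : ℝ), ∫ x : ℝ,
        Complex.exp (-(s : ℂ) * (t : ℂ) - Complex.I * (ξ : ℂ) * (x : ℂ)) *
          (((1 / (Real.pi * t)) *
            ∫ y in Ioo (-t) t, ρin (x - y) * (Real.sqrt (1 - (y / t) ^ 2))⁻¹ : ℝ) : ℂ)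
      = (∫ x : ℝ, Complex.exp (-(Complex.I * (ξ : ℂ) * (x : ℂ))) * ((ρin x : ℝ) : ℂ)) /
          ((Real.sqrt (s ^ 2 + ξ ^ 2) : ℝ) : ℂ) := by
  set g := hρin.1.mk ρin with hgdef
  have hgm : StronglyMeasurable g := hρin.1.stronglyMeasurable_mk
  have hae : ρin =ᵐ[volume] g := hρin.1.ae_eq_mk
  have hgi : Integrable g := hρin.congr hae
  have hyeq : ∀ t x : ℝ,
      (∫ y in Ioo (-t) t, ρin (x - y) * (Real.sqrt (1 - (y / t) ^ 2))⁻¹)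
        = ∫ y in Ioo (-t) t, g (x - y) * (Real.sqrt (1 - (y / t) ^ 2))⁻¹ := by
    intro t x
    apply integral_congr_ae
    have hmp : MeasurePreserving (fun y : ℝ => x - y) volume volume :=
      Measure.measurePreserving_sub_left volume x
    have h1 : (fun y : ℝ => ρin (x - y)) =ᵐ[volume] (fun y : ℝ => g (x - y)) := by
      have := ae_eq_comp (μ := volume) hmp.measurable.aemeasurable
        (g := ρin) (g' := g) (by rwa [hmp.map_eq])
      exact this
    filter_upwards [ae_restrict_of_ae h1] with y hy
    rw [hy]
  have hRHS : (∫ x : ℝ, Complex.exp (-(Complex.I * (ξ : ℂ) * (x : ℂ))) * ((ρin x : ℝ) : ℂ))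
      = ∫ x : ℝ, Complex.exp (-(Complex.I * (ξ : ℂ) * (x : ℂ))) * ((g x : ℝ) : ℂ) := by
    refine integral_congr_ae (hae.mono fun x hx => ?_)
    dsimp only
    rw [hx]
  rw [hRHS]
  have hLHS : ∀ t x : ℝ,
      Complex.exp (-(s : ℂ) * (t : ℂ) - Complex.I * (ξ : ℂ) * (x : ℂ)) *
          (((1 / (Real.pi * t)) *
            ∫ y in Ioo (-t) t, ρin (x - y) * (Real.sqrt (1 - (y / t) ^ 2))⁻¹ : ℝ) : ℂ)
        = Complex.exp (-(s : ℂ) * (t : ℂ) - Complex.I * (ξ : ℂ) * (x : ℂ)) *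
          (((1 / (Real.pi * t)) *
            ∫ y in Ioo (-t) t, g (x - y) * (Real.sqrt (1 - (y / t) ^ 2))⁻¹ : ℝ) : ℂ) := by
    intro t x
    rw [hyeq t x]
  calc ∫ t in Ioi (0 : ℝ), ∫ x : ℝ,
        Complex.exp (-(s : ℂ) * (t : ℂ) - Complex.I * (ξ : ℂ) * (x : ℂ)) *
          (((1 / (Real.pi * t)) *
            ∫ y in Ioo (-t) t, ρin (x - y) * (Real.sqrt (1 - (y / t) ^ 2))⁻¹ : ℝ) : ℂ)
      = ∫ t in Ioi (0 : ℝ), ∫ x : ℝ,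
        Complex.exp (-(s : ℂ) * (t : ℂ) - Complex.I * (ξ : ℂ) * (x : ℂ)) *
          (((1 / (Real.pi * t)) *
            ∫ y in Ioo (-t) t, g (x - y) * (Real.sqrt (1 - (y / t) ^ 2))⁻¹ : ℝ) : ℂ) := by
        refine integral_congr_ae (Filter.Eventually.of_forall fun t => ?_)
        exact integral_congr_ae (Filter.Eventually.of_forall fun x => hLHS t x)
    _ = _ := main_sm g hgm hgi s ξ hs
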